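/- For every λ ∈ [0,1], the sum over ξ = 0,…,ℓ of w_ξ(λ)² equals 1 (the itersine windows form a tight partition of unity in the squared sense on [0,1]). -/

import Mathlib

noncomputable def itersine (L : ℕ) (xi : ℤ) (lam : ℝ) : ℝ :=
  if ((xi : ℝ) - 1) / L ≤ lam ∧ lam ≤ ((xi : ℝ) + 1) / L then
    Real.sin (Real.pi / 2 * Real.cos (Real.pi / 2 * (L * lam - xi)) ^ 2)
  else 0

theorem itersine_tight_partition (L : ℕ) (hL : 0 < L) (lam : ℝ)
    (hlam : lam ∈ Set.Icc (0 : ℝ) 1) :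
    ∑ xi ∈ Finset.range (L + 1), itersine L (xi : ℤ) lam ^ 2 = 1 := by
  obtain ⟨h0, h1⟩ := hlam
  have hL' : (0:ℝ) < L := by exact_mod_cast hL
  set t : ℝ := L * lam with ht
  have ht0 : 0 ≤ t := by positivity
  have htL : t ≤ L := by nlinarith
  set n : ℕ := min ⌊t⌋.toNat (L - 1) with hn
  have hn1 : n + 1 ≤ L := by omega
  have hnt : (n:ℝ) ≤ t :=
    calc (n:ℝ) ≤ (⌊t⌋.toNat : ℝ) := by exact_mod_cast min_le_left _ _
    _ = ((⌊t⌋.toNat : ℤ) : ℝ) := by norm_cast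
    _ = ((⌊t⌋ : ℤ) : ℝ) := by
        rw [Int.toNat_of_nonneg (Int.le_floor.mpr (by simpa using ht0))]
    _ ≤ t := Int.floor_le t
  have htn : t ≤ (n:ℝ) + 1 := by
    rcases le_or_gt (⌊t⌋.toNat) (L-1) with h | h
    · have hne : n = ⌊t⌋.toNat := min_eq_left h
      have := Int.lt_floor_add_one t
      have h2 : (⌊t⌋ : ℝ) = ((⌊t⌋.toNat : ℤ) : ℝ) := by
        rw [Int.toNat_of_nonneg (Int.le_floor.mpr (by simpa using ht0))]
      rw [hne]
      push_cast at h2 ⊢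
      linarith
    · have hne : n = L - 1 := min_eq_right (le_of_lt h)
      have : ((n:ℝ) + 1) = L := by
        rw [hne]; push_cast [Nat.cast_sub hL]; ring
      linarith
  -- all terms outside {n, n+1} vanish
  have hzero : ∀ ξ ∈ Finset.range (L+1), ξ ∉ ({n, n+1} : Finset ℕ) →
      itersine L (ξ : ℤ) lam ^ 2 = 0 := by
    intro ξ _ hξ
    simp only [Finset.mem_insert, Finset.mem_singleton, not_or] at hξ
    unfold itersine
    split_ifs with hc
    · obtain ⟨hc1, hc2⟩ := hc
      rw [div_le_iff₀ hL'] at hc1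
      rw [le_div_iff₀ hL'] at hc2
      have hc1' : (ξ:ℝ) - 1 ≤ t := by push_cast at hc1 ⊢; linarith [mul_comm lam (L:ℝ)]
      have hc2' : t ≤ (ξ:ℝ) + 1 := by push_cast at hc2 ⊢; linarith [mul_comm lam (L:ℝ)]
      have hcases : ξ + 1 ≤ n ∨ n + 2 ≤ ξ := by omega
      have hval : t - (ξ:ℝ) = 1 ∨ t - (ξ:ℝ) = -1 := by
        rcases hcases with h | h
        · left
          have : (ξ:ℝ) + 1 ≤ (n:ℝ) := by exact_mod_cast h
          linarith
        · right
          have : (n:ℝ) + 2 ≤ (ξ:ℝ) := by exact_mod_cast h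
          linarith
      have htξ : (L:ℝ) * lam - (ξ:ℤ) = t - (ξ:ℝ) := by push_cast; ring
      rcases hval with h | h <;> rw [htξ, h] <;> norm_num
    · norm_num
  have hsub : ({n, n+1} : Finset ℕ) ⊆ Finset.range (L+1) := by
    intro x hx
    simp only [Finset.mem_insert, Finset.mem_singleton] at hx
    rcases hx with rfl | rfl <;> simp [Finset.mem_range] <;> omega
  rw [← Finset.sum_subset hsub (fun x hx hx' => hzero x hx hx')]
  rw [Finset.sum_pair (by omega : n ≠ n + 1)]
  set u : ℝ := t - n with hu
  have hu0 : 0 ≤ u := by simp [hu]; linarith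
  have hu1 : u ≤ 1 := by simp [hu]; linarith
  have hv1 : itersine L (n : ℤ) lam =
      Real.sin (Real.pi / 2 * Real.cos (Real.pi / 2 * u) ^ 2) := by
    unfold itersine
    rw [if_pos]
    · have harg0 : (L:ℝ) * lam - ((n:ℤ):ℝ) = u := by push_cast [hu]; ring
      rw [harg0]
    · constructor
      · rw [div_le_iff₀ hL']
        push_cast
        nlinarith [mul_comm lam (L:ℝ)]
      · rw [le_div_iff₀ hL']
        push_cast
        nlinarith [mul_comm lam (L:ℝ)]
  have hv2 : itersine L ((n:ℤ) + 1) lam =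
      Real.cos (Real.pi / 2 * Real.cos (Real.pi / 2 * u) ^ 2) := by
    unfold itersine
    rw [if_pos]
    · have harg : (L:ℝ) * lam - ((n:ℤ):ℝ) - 1 = u - 1 := by push_cast [hu]; ring
      have h1 : Real.pi / 2 * ((L:ℝ) * lam - (((n:ℤ) + 1 : ℤ) : ℝ)) =
          -(Real.pi / 2 - Real.pi / 2 * u) := by push_cast [hu]; ring
      rw [h1, Real.cos_neg, Real.cos_pi_div_two_sub]
      rw [Real.sin_sq]
      have h2 : Real.pi / 2 * (1 - Real.cos (Real.pi / 2 * u) ^ 2) =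
          Real.pi / 2 - Real.pi / 2 * Real.cos (Real.pi / 2 * u) ^ 2 := by ring
      rw [h2, Real.sin_pi_div_two_sub]
    · constructor
      · rw [div_le_iff₀ hL']
        push_cast
        nlinarith [mul_comm lam (L:ℝ)]
      · rw [le_div_iff₀ hL']
        push_cast
        nlinarith [mul_comm lam (L:ℝ)]
  have hcast : ((n + 1 : ℕ) : ℤ) = (n : ℤ) + 1 := by push_cast; ring
  rw [hcast, hv1, hv2, Real.sin_sq_add_cos_sq]
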